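/- Let F = ⟨A, R, W, S⟩ be a semiring-based weighted argumentation framework over an absorptive c-semiring S, let Z ⊆ A be a w-admissible extension of F, and let B = A \ (Z ∪ R⁺(Z)). If T ⊆ B is a w-stable extension of the restricted framework F|_B and every argument of T is w-defended by Z ∪ T in F, then Z ∪ T is a w-stable extension of F. -/
import Mathlib


open Finset

variable {A : Type*} [Fintype A] [DecidableEq A] {S : Type*} [CommSemiring S]

/-- The order induced by the idempotent addition of a c-semiring: `a ≤ₛ b` iff `a + b = b`. -/
def sLE (a b : S) : Prop := a + b = b

/-- The attack weight `W(B, D)` from a set of arguments `B` to a set `D`: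
the semiring product of all pairwise weights. -/
def Wsets (W : A → A → S) (B D : Finset A) : S := ∏ b ∈ B, ∏ d ∈ D, W b d

/-- `B` is w-conflict-free iff `W(B, B) = ⊤` (here `⊤` is the multiplicative unit `1`). -/
def wConflictFree (W : A → A → S) (B : Finset A) : Prop := Wsets W B B = 1

/-- Within the framework whose set of arguments is `U`, the set `B` w-defends `b`:
for every attacker `a ∈ U` of `b` (i.e. `W a b ≠ ⊤`), `W(a, B ∪ {b}) ≥ₛ W(B, a)`. -/
def wDefendsIn (W : A → A → S) (U B : Finset A) (b : A) : Prop :=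
  ∀ a ∈ U, W a b ≠ 1 → sLE (Wsets W B {a}) (Wsets W {a} (insert b B))

/-- `B` is w-admissible in the framework with argument set `U`:
`B ⊆ U`, `B` is w-conflict-free, and `B` w-defends each of its members. -/
def wAdmissibleIn (W : A → A → S) (U B : Finset A) : Prop :=
  B ⊆ U ∧ wConflictFree W B ∧ ∀ b ∈ B, wDefendsIn W U B b

/-- `B` is a w-stable extension: w-admissible and every argument of `U` outside `B`
is attacked by some member of `B`. -/
def wStableIn (W : A → A → S) (U B : Finset A) : Prop :=
  wAdmissibleIn W U B ∧ ∀ a ∈ U, a ∉ B → ∃ b ∈ B, W b a ≠ 1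

/-- `B` is a w-complete extension: w-admissible and it contains every argument `b`
such that `B ∪ {b}` is w-admissible. -/
def wCompleteIn (W : A → A → S) (U B : Finset A) : Prop :=
  wAdmissibleIn W U B ∧ ∀ b ∈ U, wAdmissibleIn W U (insert b B) → b ∈ B

/-- `B` is a w-preferred extension: a ⊆-maximal w-admissible subset. -/
def wPreferredIn (W : A → A → S) (U B : Finset A) : Prop :=
  wAdmissibleIn W U B ∧ ∀ C : Finset A, wAdmissibleIn W U C → B ⊆ C → C = B

section Aux

lemma sLE_one (habs : ∀ s t : S, s + s * t = s) (s : S) : sLE s 1 := by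
  have := habs 1 s
  rw [one_mul] at this
  unfold sLE
  rw [add_comm]
  exact this

lemma sLE_trans {a b c : S} (h1 : sLE a b) (h2 : sLE b c) : sLE a c := by
  unfold sLE at *
  rw [← h2, ← add_assoc, h1]

lemma mul_sLE_left (habs : ∀ s t : S, s + s * t = s) (a b : S) : sLE (a * b) a := by
  unfold sLE
  rw [add_comm]
  exact habs a b

lemma sLE_mul_right (habs : ∀ s t : S, s + s * t = s) {a b : S} (c : S)
    (h : sLE a b) : sLE (a * c) (b * c) := by
  unfold sLE at *
  rw [← add_mul, h]

lemma eq_one_of_one_sLE (habs : ∀ s t : S, s + s * t = s) {a : S}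
    (h : sLE 1 a) : a = 1 := by
  have h2 := sLE_one habs a
  unfold sLE at h h2
  calc a = 1 + a := h.symm
    _ = a + 1 := add_comm _ _
    _ = 1 := h2

lemma prod_eq_one_factor {ι : Type*} [DecidableEq ι]
    (habs : ∀ s t : S, s + s * t = s) {s : Finset ι} {f : ι → S}
    (h : ∏ x ∈ s, f x = 1) : ∀ x ∈ s, f x = 1 := by
  intro x hx
  have hsplit := Finset.mul_prod_erase s f hx
  rw [h] at hsplit
  have h1 : sLE 1 (f x) := by
    have := mul_sLE_left habs (f x) (∏ y ∈ s.erase x, f y)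
    rwa [hsplit] at this
  exact eq_one_of_one_sLE habs h1

lemma Wsets_union_left (W : A → A → S) {X Y : Finset A} (D : Finset A)
    (h : Disjoint X Y) : Wsets W (X ∪ Y) D = Wsets W X D * Wsets W Y D :=
  Finset.prod_union h

lemma Wsets_union_right (W : A → A → S) (D : Finset A) {X Y : Finset A}
    (h : Disjoint X Y) : Wsets W D (X ∪ Y) = Wsets W D X * Wsets W D Y := by
  unfold Wsets
  rw [← Finset.prod_mul_distrib]
  exact Finset.prod_congr rfl fun b _ => Finset.prod_union h

lemma Wsets_row (W : A → A → S) (D : Finset A) (a : A) :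
    Wsets W {a} D = ∏ d ∈ D, W a d := Finset.prod_singleton ..

lemma Wsets_col (W : A → A → S) (D : Finset A) (a : A) :
    Wsets W D {a} = ∏ b ∈ D, W b a :=
  Finset.prod_congr rfl fun b _ => Finset.prod_singleton ..

end Aux

/-- Division/union theorem: if Z is w-admissible in F, B = A \ (Z ∪ R⁺(Z)) is the
remaining sub-framework's argument set, T ⊆ B is a w-stable extension of F|_B, and
every argument of T is w-defended by Z ∪ T in F, then Z ∪ T is a w-stable extension
of F.  (Here a ∈ B iff a ∉ Z and no member of Z attacks a, i.e. W(i,a) = ⊤ for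
all i ∈ Z.) -/
theorem union_stable (W : A → A → S)
    (hadd : ∀ s : S, s + s = s) (habs : ∀ s t : S, s + s * t = s)
    (Z : Finset A) (hZ : wAdmissibleIn W Finset.univ Z)
    (B : Finset A) (hB : ∀ a : A, a ∈ B ↔ a ∉ Z ∧ ∀ i ∈ Z, W i a = 1)
    (T : Finset A) (hT : T ⊆ B)
    (hTB : wStableIn W B T)
    (hdef : ∀ t ∈ T, wDefendsIn W Finset.univ (Z ∪ T) t) :
    wStableIn W Finset.univ (Z ∪ T) := by
  obtain ⟨hZsub, hZcf, hZdef⟩ := hZ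
  obtain ⟨⟨hTsub, hTcf, hTdef⟩, hTst⟩ := hTB
  have hdisj : Disjoint Z T := by
    rw [Finset.disjoint_left]
    intro a haZ haT
    exact ((hB a).mp (hT haT)).1 haZ
  have hZT1 : ∀ z ∈ Z, ∀ t ∈ T, W z t = 1 := fun z hz t ht => ((hB t).mp (hT ht)).2 z hz
  have hTZ1 : ∀ t ∈ T, ∏ z ∈ Z, W t z = 1 := by
    intro t ht
    by_cases hcase : ∀ z ∈ Z, W t z = 1
    · exact Finset.prod_eq_one hcase
    · push_neg at hcase
      obtain ⟨z0, hz0Z, hz0⟩ := hcase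
      have hd := hZdef z0 hz0Z t (Finset.mem_univ t) hz0
      rw [Finset.insert_eq_self.mpr hz0Z, Wsets_col, Wsets_row] at hd
      have hcol1 : (∏ b ∈ Z, W b t) = 1 := Finset.prod_eq_one (fun z hz => hZT1 z hz t ht)
      rw [hcol1] at hd
      exact eq_one_of_one_sLE habs hd
  have hZTcf : Wsets W Z T = 1 := by
    unfold Wsets
    exact Finset.prod_eq_one fun z hz => Finset.prod_eq_one fun t ht => hZT1 z hz t ht
  have hTZcf : Wsets W T Z = 1 := by
    unfold Wsets
    exact Finset.prod_eq_one fun t ht => hTZ1 t ht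
  have hcf : wConflictFree W (Z ∪ T) := by
    unfold wConflictFree
    rw [Wsets_union_left W _ hdisj, Wsets_union_right W _ hdisj, Wsets_union_right W _ hdisj,
      hZTcf, hTZcf]
    have h1 : Wsets W Z Z = 1 := hZcf
    have h2 : Wsets W T T = 1 := hTcf
    rw [h1, h2]
    ring
  have hdefend : ∀ b ∈ Z ∪ T, wDefendsIn W Finset.univ (Z ∪ T) b := by
    intro b hb
    rcases Finset.mem_union.mp hb with hbZ | hbT
    · intro a _ hab
      rw [Finset.insert_eq_self.mpr (Finset.mem_union_left T hbZ)]
      by_cases hat : ∃ t ∈ T, W a t ≠ 1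
      · obtain ⟨t, ht, hwat⟩ := hat
        have h := hdef t ht a (Finset.mem_univ a) hwat
        rwa [Finset.insert_eq_self.mpr (Finset.mem_union_right Z ht)] at h
      · push_neg at hat
        have hZd := hZdef b hbZ a (Finset.mem_univ a) hab
        rw [Finset.insert_eq_self.mpr hbZ] at hZd
        have haT : Wsets W {a} T = 1 := by rw [Wsets_row]; exact Finset.prod_eq_one hat
        rw [Wsets_union_left W _ hdisj, Wsets_union_right W _ hdisj, haT, mul_one]
        exact sLE_trans (mul_sLE_left habs _ _) hZd
    · exact hdef b hbT
  refine ⟨⟨Finset.subset_univ _, hcf, hdefend⟩, ?_⟩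
  intro a _ haZT
  by_cases haB : a ∈ B
  · obtain ⟨t, ht, hw⟩ := hTst a haB (fun h => haZT (Finset.mem_union_right Z h))
    exact ⟨t, Finset.mem_union_right Z ht, hw⟩
  · have haZ : a ∉ Z := fun h => haZT (Finset.mem_union_left T h)
    by_contra hcon
    push_neg at hcon
    exact haB ((hB a).mpr ⟨haZ, fun i hi => hcon i (Finset.mem_union_left T hi)⟩)
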